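/- With H defined as above from a convex-valued closed-graph correspondence G, H is linear on Δ(X): for all z, z' ∈ Δ(X) and λ ∈ [0,1], H(λ·z + (1−λ)·z') = λ·H(z) + (1−λ)·H(z'), where λ·μ + (1−λ)·μ' denotes the convex combination of measures and λ·A + (1−λ)·B the Minkowski-type combination of sets of measures. -/

import Mathlib

open MeasureTheory Filter Topology

variable {X : Type*} [MetricSpace X] [CompactSpace X] [MeasurableSpace X] [BorelSpace X]
  [MeasurableSpace (ProbabilityMeasure X)] [BorelSpace (ProbabilityMeasure X)]

/-- The convex combination `t·μ + (1−t)·ν` of two probability measures, as a measure. -/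
noncomputable def pcomb (t : ℝ) (μ ν : ProbabilityMeasure X) : Measure X :=
  ENNReal.ofReal t • (μ : Measure X) + ENNReal.ofReal (1 - t) • (ν : Measure X)

/-- The one-step correspondence `H` on `Δ(X)` induced by a correspondence `G : X ⇉ Δ(X)`. -/
def Hcorr (G : X → Set (ProbabilityMeasure X)) (z : ProbabilityMeasure X) :
    Set (ProbabilityMeasure X) :=
  {μ : ProbabilityMeasure X | ∃ σ : X → ProbabilityMeasure X,
    Measurable σ ∧ (∀ x, σ x ∈ G x) ∧
    ∀ f : C(X, ℝ),
      (∫ x, f x ∂(μ : Measure X))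
        = ∫ x, (∫ y, f y ∂(σ x : Measure X)) ∂(z : Measure X)}

/-- Two finite Borel measures on a compact metric space agree if their integrals of
continuous functions agree. -/
lemma measure_ext_cont {μ ν : Measure X} [IsFiniteMeasure μ] [IsFiniteMeasure ν]
    (h : ∀ f : C(X, ℝ), ∫ x, f x ∂μ = ∫ x, f x ∂ν) : μ = ν := by
  apply ext_of_forall_lintegral_eq_of_IsFiniteMeasure
  intro f
  have hc : Continuous fun x => ((f x : ℝ)) := NNReal.continuous_coe.comp f.continuous
  have hint : ∀ (ρ : Measure X) [IsFiniteMeasure ρ], Integrable (fun x => ((f x : ℝ))) ρ := by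
    intro ρ _
    exact (BoundedContinuousFunction.mkOfCompact ⟨_, hc⟩).integrable ρ
  rw [lintegral_coe_eq_integral _ (hint μ), lintegral_coe_eq_integral _ (hint ν)]
  exact congrArg ENNReal.ofReal (h ⟨_, hc⟩)

lemma continuous_integral_cm (f : C(X, ℝ)) :
    Continuous fun μ : ProbabilityMeasure X => ∫ x, f x ∂(μ : Measure X) :=
  ProbabilityMeasure.continuous_integral_boundedContinuousFunction
    (BoundedContinuousFunction.mkOfCompact f)

lemma norm_integral_le_prob (f : C(X, ℝ)) (μ : Measure X) [IsProbabilityMeasure μ] :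
    ‖∫ x, f x ∂μ‖ ≤ ‖f‖ := by
  have := norm_integral_le_of_norm_le_const (μ := μ) (f := fun x => f x) (C := ‖f‖)
    (Eventually.of_forall fun x => f.norm_coe_le_norm x)
  simpa using this

lemma integral_sub_le_dist (f g : C(X, ℝ)) (μ : Measure X) [IsProbabilityMeasure μ] :
    dist (∫ x, f x ∂μ) (∫ x, g x ∂μ) ≤ dist f g := by
  have hif : Integrable (fun x => f x) μ := by
    exact (BoundedContinuousFunction.mkOfCompact f).integrable μ
  have hig : Integrable (fun x => g x) μ := by
    exact (BoundedContinuousFunction.mkOfCompact g).integrable μ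
  rw [dist_eq_norm, ← integral_sub hif hig]
  have := norm_integral_le_of_norm_le_const (μ := μ) (f := fun x => f x - g x) (C := dist f g)
    (Eventually.of_forall fun x => by
      rw [← dist_eq_norm]; exact ContinuousMap.dist_apply_le_dist x)
  simpa using this

/-- The space of probability measures on a compact metric space is second countable. -/
lemma secondCountable_probabilityMeasure :
    SecondCountableTopology (ProbabilityMeasure X) := by
  obtain ⟨F, Fcount, Fdense⟩ := TopologicalSpace.exists_countable_dense C(X, ℝ)
  haveI : Countable F := Fcount.to_subtype
  let Φ : ProbabilityMeasure X → (F → ℝ) := fun μ f => ∫ x, (f : C(X, ℝ)) x ∂(μ : Measure X)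
  have hΦcont : Continuous Φ :=
    continuous_pi fun f => continuous_integral_cm (f : C(X, ℝ))
  have : IsInducing Φ := by
    rw [isInducing_iff_nhds]
    intro μ
    refine le_antisymm (hΦcont.continuousAt.le_comap) ?_
    have : Tendsto id (comap Φ (𝓝 (Φ μ))) (𝓝 μ) := by
      rw [ProbabilityMeasure.tendsto_iff_forall_integral_tendsto]
      intro f
      rw [Metric.tendsto_nhds]
      intro ε hε
      set f' : C(X, ℝ) := f.toContinuousMap with hf'
      obtain ⟨g, hgd, hgF⟩ := Metric.dense_iff.mp Fdense f' (ε/3) (by linarith)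
      have hcoord : Tendsto (fun ν => Φ ν ⟨g, hgF⟩) (comap Φ (𝓝 (Φ μ))) (𝓝 (Φ μ ⟨g, hgF⟩)) :=
        (((continuous_apply (⟨g, hgF⟩ : F)).tendsto (Φ μ)).comp tendsto_comap : _)
    
      have hg : ∀ᶠ ν in comap Φ (𝓝 (Φ μ)), dist (Φ ν ⟨g, hgF⟩) (Φ μ ⟨g, hgF⟩) < ε/3 :=
        Metric.tendsto_nhds.mp hcoord (ε/3) (by linarith)
      filter_upwards [hg] with ν hν
      have h1 : ∀ (ρ : ProbabilityMeasure X),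
          dist (∫ x, f x ∂(ρ : Measure X)) (Φ ρ ⟨g, hgF⟩) ≤ ε/3 := by
        intro ρ
        have := integral_sub_le_dist f' g (ρ : Measure X)
        simp only [Φ]
        calc dist (∫ x, f x ∂(ρ : Measure X)) (∫ x, g x ∂(ρ : Measure X)) ≤ dist f' g := this
        _ ≤ ε/3 := le_of_lt (by rw [dist_comm]; exact Metric.mem_ball.mp hgd)
      calc dist (∫ x, f x ∂(ν : Measure X)) (∫ x, f x ∂(μ : Measure X))
          ≤ dist (∫ x, f x ∂(ν : Measure X)) (Φ ν ⟨g, hgF⟩)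
            + dist (Φ ν ⟨g, hgF⟩) (Φ μ ⟨g, hgF⟩)
            + dist (Φ μ ⟨g, hgF⟩) (∫ x, f x ∂(μ : Measure X)) := dist_triangle4 _ _ _ _
        _ < ε/3 + ε/3 + ε/3 := by
            refine add_lt_add_of_lt_of_le (add_lt_add_of_le_of_lt (h1 ν) hν) ?_
            rw [dist_comm]; exact h1 μ
        _ = ε := by ring
    exact this
  exact this.secondCountableTopology


set_option linter.unusedSectionVars false

lemma lsc_open {G : Set X} (hG : IsOpen G) :
    LowerSemicontinuous fun μ : ProbabilityMeasure X => (μ : Measure X) G := by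
  intro μ
  change LowerSemicontinuousAt _ μ
  rw [lowerSemicontinuousAt_iff_le_liminf]
  exact ProbabilityMeasure.le_liminf_measure_open_of_tendsto (tendsto_id (x := 𝓝 μ)) hG

lemma measurable_eval : ∀ ⦃s : Set X⦄, MeasurableSet s →
    Measurable fun μ : ProbabilityMeasure X => (μ : Measure X) s := by
  refine MeasurableSpace.induction_on_inter
    (m := ‹MeasurableSpace X›) (C := fun s _ => Measurable fun μ : ProbabilityMeasure X => (μ : Measure X) s)
    (by rw [BorelSpace.measurable_eq (α := X)]; rfl) isPiSystem_isOpen ?_ ?_ ?_ ?_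
  · simp only [measure_empty]; exact measurable_const
  · exact fun t ht => (lsc_open ht).measurable
  · intro t htm iht
    have : (fun μ : ProbabilityMeasure X => (μ : Measure X) tᶜ)
        = fun μ : ProbabilityMeasure X => 1 - (μ : Measure X) t := by
      ext μ; rw [prob_compl_eq_one_sub htm]
    rw [this]
    exact measurable_const.sub iht
  · intro f hdisj hfm ihf
    have : (fun μ : ProbabilityMeasure X => (μ : Measure X) (⋃ i, f i))
        = fun μ : ProbabilityMeasure X => ∑' i, (μ : Measure X) (f i) := by
      ext μ; exact measure_iUnion hdisj hfm
    rw [this]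
    exact Measurable.ennreal_tsum ihf

lemma measurable_toMeasure :
    Measurable fun μ : ProbabilityMeasure X => (μ : Measure X) :=
  Measure.measurable_of_measurable_coe _ fun s hs => measurable_eval hs

section Bind

variable (z : Measure X) [IsProbabilityMeasure z] (σ : X → ProbabilityMeasure X) (hσ : Measurable σ)
include hσ

omit hσ in
lemma measurable_comp_toMeasure (hσ : Measurable σ) : Measurable fun x => (σ x : Measure X) :=
  measurable_toMeasure.comp hσ

/-- The bind of a probability measure with a measurable family of probability measures. -/
lemma isProbabilityMeasure_bind :
    IsProbabilityMeasure (z.bind fun x => (σ x : Measure X)) := by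
  constructor
  rw [Measure.bind_apply MeasurableSet.univ (measurable_comp_toMeasure σ hσ).aemeasurable]
  simp

lemma integral_bind_cont (f : C(X, ℝ)) :
    ∫ y, f y ∂(z.bind fun x => (σ x : Measure X))
      = ∫ x, ∫ y, f y ∂(σ x : Measure X) ∂z := by
  haveI := isProbabilityMeasure_bind z σ hσ
  have hm := measurable_comp_toMeasure σ hσ
  -- the key nonnegative computation
  have key : ∀ g : C(X, ℝ), (∀ x, 0 ≤ g x) →
      ∫ y, g y ∂(z.bind fun x => (σ x : Measure X))
        = ∫ x, ∫ y, g y ∂(σ x : Measure X) ∂z := by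
    intro g hg
    have hgm : Measurable fun y => ENNReal.ofReal (g y) :=
      g.continuous.measurable.ennreal_ofReal
    have hb : ∀ (ρ : Measure X) [IsProbabilityMeasure ρ],
        ∫ y, g y ∂ρ = (∫⁻ y, ENNReal.ofReal (g y) ∂ρ).toReal := by
      intro ρ _
      rw [integral_eq_lintegral_of_nonneg_ae (Eventually.of_forall hg)
        g.continuous.measurable.aestronglyMeasurable]
    rw [hb _, Measure.lintegral_bind hm.aemeasurable hgm.aemeasurable]
    have hin : ∀ x, ∫⁻ y, ENNReal.ofReal (g y) ∂(σ x : Measure X) ≤ ENNReal.ofReal ‖g‖ := by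
      intro x
      calc ∫⁻ y, ENNReal.ofReal (g y) ∂(σ x : Measure X)
          ≤ ∫⁻ _, ENNReal.ofReal ‖g‖ ∂(σ x : Measure X) := by
            refine lintegral_mono fun y => ENNReal.ofReal_le_ofReal ?_
            exact (le_abs_self _).trans (g.norm_coe_le_norm y)
        _ = ENNReal.ofReal ‖g‖ := by simp
    have hmeas : Measurable fun x => ∫⁻ y, ENNReal.ofReal (g y) ∂(σ x : Measure X) :=
      (Measure.measurable_lintegral hgm).comp hm
    rw [← integral_toReal hmeas.aemeasurable
      (Eventually.of_forall fun x => lt_of_le_of_lt (hin x)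
        ENNReal.ofReal_lt_top)]
    congr 1
    ext x
    rw [hb (σ x : Measure X)]
  -- reduce general f to the nonnegative case via a shift
  set c := ‖f‖ with hc
  set g : C(X, ℝ) := f + ContinuousMap.const X c with hgdef
  have hg : ∀ x, 0 ≤ g x := fun x => by
    simp only [hgdef, ContinuousMap.add_apply, ContinuousMap.const_apply]
    have habs : |f x| ≤ ‖f‖ := by
      rw [← Real.norm_eq_abs]; exact f.norm_coe_le_norm x
    linarith [(abs_le.mp habs).1]
  have hsplit : ∀ (ρ : Measure X) [IsProbabilityMeasure ρ],
      ∫ y, g y ∂ρ = ∫ y, f y ∂ρ + c := by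
    intro ρ _
    have hif : Integrable (fun y => f y) ρ := by
      exact (BoundedContinuousFunction.mkOfCompact f).integrable ρ
    simp only [hgdef, ContinuousMap.add_apply, ContinuousMap.const_apply]
    rw [integral_add hif (integrable_const c), integral_const]
    simp
  have hkey := key g hg
  rw [hsplit _] at hkey
  have : ∫ x, ∫ y, g y ∂(σ x : Measure X) ∂z
      = ∫ x, (∫ y, f y ∂(σ x : Measure X)) + c ∂z := by
    congr 1; ext x; rw [hsplit (σ x : Measure X)]
  rw [this] at hkey
  -- integrability of the inner integral
  have hIm : Measurable fun x => ∫ y, f y ∂(σ x : Measure X) :=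
    (continuous_integral_cm f).measurable.comp hσ
  have hIint : Integrable (fun x => ∫ y, f y ∂(σ x : Measure X)) z := by
    refine Integrable.mono' (integrable_const c) hIm.aestronglyMeasurable ?_
    exact Eventually.of_forall fun x => norm_integral_le_prob f (σ x : Measure X)
  rw [integral_add hIint (integrable_const c), integral_const] at hkey
  simp only [measure_univ, probReal_univ, ENNReal.toReal_one, smul_eq_mul, one_mul] at hkey
  linarith

end Bind

section Pcomb

lemma isProbabilityMeasure_pcomb {t : ℝ} (ht : t ∈ Set.Icc (0:ℝ) 1)
    (μ ν : ProbabilityMeasure X) : IsProbabilityMeasure (pcomb t μ ν) := by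
  constructor
  simp only [pcomb, Measure.add_apply, Measure.smul_apply, smul_eq_mul, measure_univ, mul_one]
  rw [← ENNReal.ofReal_add ht.1 (by linarith [ht.2])]
  norm_num

lemma integral_pcomb {t : ℝ} (ht : t ∈ Set.Icc (0:ℝ) 1)
    (μ ν : ProbabilityMeasure X) {f : X → ℝ}
    (hfμ : Integrable f (μ : Measure X)) (hfν : Integrable f (ν : Measure X)) :
    ∫ x, f x ∂(pcomb t μ ν)
      = t * ∫ x, f x ∂(μ : Measure X) + (1 - t) * ∫ x, f x ∂(ν : Measure X) := by
  rw [pcomb, integral_add_measure (hfμ.smul_measure ENNReal.ofReal_ne_top)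
    (hfν.smul_measure ENNReal.ofReal_ne_top), integral_smul_measure, integral_smul_measure,
    ENNReal.toReal_ofReal ht.1, ENNReal.toReal_ofReal (by linarith [ht.2] : (0:ℝ) ≤ 1 - t)]
  simp [smul_eq_mul]

/-- clamping to `[0,1]`. -/
noncomputable def clamp (t : ℝ) : ℝ := max 0 (min 1 t)

lemma clamp_mem (t : ℝ) : clamp t ∈ Set.Icc (0:ℝ) 1 :=
  ⟨le_max_left _ _, max_le zero_le_one (min_le_left _ _)⟩

lemma clamp_eq {t : ℝ} (ht : t ∈ Set.Icc (0:ℝ) 1) : clamp t = t := by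
  simp only [clamp, min_eq_right ht.2, max_eq_right ht.1]

lemma continuous_clamp : Continuous clamp :=
  continuous_const.max (continuous_const.min continuous_id)

/-- The convex combination as a probability measure, with clamped weight. -/
noncomputable def pprob (t : ℝ) (μ ν : ProbabilityMeasure X) : ProbabilityMeasure X :=
  ⟨pcomb (clamp t) μ ν, isProbabilityMeasure_pcomb (clamp_mem t) μ ν⟩

lemma pprob_coe (t : ℝ) (μ ν : ProbabilityMeasure X) :
    (pprob t μ ν : Measure X) = pcomb (clamp t) μ ν := rfl

lemma integral_pprob (t : ℝ) (μ ν : ProbabilityMeasure X) {f : X → ℝ}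
    (hfμ : Integrable f (μ : Measure X)) (hfν : Integrable f (ν : Measure X)) :
    ∫ x, f x ∂(pprob t μ ν : Measure X)
      = clamp t * ∫ x, f x ∂(μ : Measure X)
        + (1 - clamp t) * ∫ x, f x ∂(ν : Measure X) := by
  rw [pprob_coe]; exact integral_pcomb (clamp_mem t) μ ν hfμ hfν

lemma continuous_pprob :
    Continuous fun p : ℝ × ProbabilityMeasure X × ProbabilityMeasure X =>
      pprob p.1 p.2.1 p.2.2 := by
  rw [continuous_iff_continuousAt]
  intro p
  unfold ContinuousAt
  rw [ProbabilityMeasure.tendsto_iff_forall_integral_tendsto]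
  intro f
  have hint : ∀ ρ : ProbabilityMeasure X, Integrable (fun x => f x) (ρ : Measure X) :=
    fun ρ => f.integrable _
  have heq : ∀ q : ℝ × ProbabilityMeasure X × ProbabilityMeasure X,
      ∫ x, f x ∂(pprob q.1 q.2.1 q.2.2 : Measure X)
        = clamp q.1 * ∫ x, f x ∂(q.2.1 : Measure X)
          + (1 - clamp q.1) * ∫ x, f x ∂(q.2.2 : Measure X) :=
    fun q => integral_pprob q.1 q.2.1 q.2.2 (hint _) (hint _)
  simp only [heq]
  have hc1 : Continuous fun q : ℝ × ProbabilityMeasure X × ProbabilityMeasure X =>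
      ∫ x, f x ∂(q.2.1 : Measure X) :=
    (ProbabilityMeasure.continuous_integral_boundedContinuousFunction f).comp
      (continuous_fst.comp continuous_snd)
  have hc2 : Continuous fun q : ℝ × ProbabilityMeasure X × ProbabilityMeasure X =>
      ∫ x, f x ∂(q.2.2 : Measure X) :=
    (ProbabilityMeasure.continuous_integral_boundedContinuousFunction f).comp
      (continuous_snd.comp continuous_snd)
  have hcl : Continuous fun q : ℝ × ProbabilityMeasure X × ProbabilityMeasure X =>
      clamp q.1 := continuous_clamp.comp continuous_fst
  exact (((hcl.mul hc1).add (((continuous_const.sub hcl)).mul hc2)).tendsto p)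

end Pcomb

lemma integrable_inner_integral (σ : X → ProbabilityMeasure X) (hσ : Measurable σ)
    (f : C(X, ℝ)) (ρ : Measure X) [IsFiniteMeasure ρ] :
    Integrable (fun x => ∫ y, f y ∂(σ x : Measure X)) ρ := by
  refine Integrable.mono' (integrable_const ‖f‖)
    ((continuous_integral_cm f).measurable.comp hσ).aestronglyMeasurable ?_
  exact Eventually.of_forall fun x => norm_integral_le_prob f (σ x : Measure X)

/-- the correspondence `H` induced by a convex-valued closed-graph
correspondence `G` is linear on `Δ(X)`:
`H(λ·z + (1−λ)·z') = λ·H(z) + (1−λ)·H(z')`. -/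
theorem Hcorr_linear
    (G : X → Set (ProbabilityMeasure X))
    (hclosed : IsClosed {p : X × ProbabilityMeasure X | p.2 ∈ G p.1})
    (hne : ∀ x, (G x).Nonempty)
    (hconv : ∀ x, ∀ μ ∈ G x, ∀ ν ∈ G x, ∀ t ∈ Set.Icc (0 : ℝ) 1,
      ∃ ρ ∈ G x, (ρ : Measure X) = pcomb t μ ν) :
    ∀ z z' : ProbabilityMeasure X, ∀ t ∈ Set.Icc (0 : ℝ) 1,
      ∀ w : ProbabilityMeasure X, (w : Measure X) = pcomb t z z' →
        Hcorr G w
          = {μ : ProbabilityMeasure X |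
              ∃ a ∈ Hcorr G z, ∃ b ∈ Hcorr G z', (μ : Measure X) = pcomb t a b} := by
  intro z z' t ht w hw
  have hw' : ∀ g : X → ℝ, Integrable g (z : Measure X) → Integrable g (z' : Measure X) →
      ∫ x, g x ∂(w : Measure X)
        = t * ∫ x, g x ∂(z : Measure X) + (1 - t) * ∫ x, g x ∂(z' : Measure X) := by
    intro g hg hg'
    rw [hw]; exact integral_pcomb ht z z' hg hg'
  ext μ
  constructor
  · rintro ⟨σ, hσ, hσG, hσint⟩
    haveI hza := isProbabilityMeasure_bind (z : Measure X) σ hσ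
    haveI hzb := isProbabilityMeasure_bind (z' : Measure X) σ hσ
    set a : ProbabilityMeasure X := ⟨_, hza⟩ with hadef
    set b : ProbabilityMeasure X := ⟨_, hzb⟩ with hbdef
    have hacoe : (a : Measure X) = (z : Measure X).bind fun x => (σ x : Measure X) := rfl
    have hbcoe : (b : Measure X) = (z' : Measure X).bind fun x => (σ x : Measure X) := rfl
    have haeq : ∀ f : C(X, ℝ), ∫ x, f x ∂(a : Measure X)
        = ∫ x, (∫ y, f y ∂(σ x : Measure X)) ∂(z : Measure X) :=
      fun f => by rw [hacoe]; exact integral_bind_cont _ σ hσ f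
    have hbeq : ∀ f : C(X, ℝ), ∫ x, f x ∂(b : Measure X)
        = ∫ x, (∫ y, f y ∂(σ x : Measure X)) ∂(z' : Measure X) :=
      fun f => by rw [hbcoe]; exact integral_bind_cont _ σ hσ f
    have ha : a ∈ Hcorr G z := ⟨σ, hσ, hσG, haeq⟩
    have hb : b ∈ Hcorr G z' := ⟨σ, hσ, hσG, hbeq⟩
    refine ⟨a, ha, b, hb, ?_⟩
    haveI := isProbabilityMeasure_pcomb ht a b
    apply measure_ext_cont
    intro f
    have h1 : ∫ x, f x ∂(μ : Measure X)
        = ∫ x, (∫ y, f y ∂(σ x : Measure X)) ∂(w : Measure X) := hσint f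
    rw [h1, hw' _ (integrable_inner_integral σ hσ f _) (integrable_inner_integral σ hσ f _),
      integral_pcomb ht a b (by exact (BoundedContinuousFunction.mkOfCompact f).integrable _)
        (by exact (BoundedContinuousFunction.mkOfCompact f).integrable _),
      ← haeq f, ← hbeq f]
  · rintro ⟨a, ⟨σ₁, hσ₁, hG₁, hint₁⟩, b, ⟨σ₂, hσ₂, hG₂, hint₂⟩, hμ⟩
    -- degenerate cases
    by_cases ht0 : t = 0
    · subst ht0
      have hwz : (w : Measure X) = (z' : Measure X) := by
        rw [hw]; simp [pcomb]
      have hμb : (μ : Measure X) = (b : Measure X) := by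
        rw [hμ]; simp [pcomb]
      exact ⟨σ₂, hσ₂, hG₂, fun f => by rw [hμb, hwz]; exact hint₂ f⟩
    by_cases ht1 : t = 1
    · subst ht1
      have hwz : (w : Measure X) = (z : Measure X) := by
        rw [hw]; simp [pcomb]
      have hμa : (μ : Measure X) = (a : Measure X) := by
        rw [hμ]; simp [pcomb]
      exact ⟨σ₁, hσ₁, hG₁, fun f => by rw [hμa, hwz]; exact hint₁ f⟩
    -- main case : 0 < t < 1
    have htpos : 0 < t := lt_of_le_of_ne ht.1 (Ne.symm ht0)
    have htlt : t < 1 := lt_of_le_of_ne ht.2 ht1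
    set W : Measure X := (w : Measure X) with hWdef
    set Z : Measure X := (z : Measure X) with hZdef
    set Z' : Measure X := (z' : Measure X) with hZ'def
    set τ : ENNReal := ENNReal.ofReal t with hτdef
    set τ' : ENNReal := ENNReal.ofReal (1 - t) with hτ'def
    have hWc : W = τ • Z + τ' • Z' := hw
    haveI : IsFiniteMeasure (τ • Z) := by
      constructor
      simp only [Measure.smul_apply, smul_eq_mul, measure_univ, mul_one]
      exact ENNReal.ofReal_lt_top
    have hle : τ • Z ≤ W := by rw [hWc]; exact Measure.le_add_right le_rfl
    set g : X → ENNReal := (τ • Z).rnDeriv W with hgdef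
    have hgm : Measurable g := Measure.measurable_rnDeriv _ _
    have hwd : W.withDensity g = τ • Z :=
      Measure.withDensity_rnDeriv_eq _ _ (Measure.absolutelyContinuous_of_le hle)
    have hgae : g ≤ᵐ[W] 1 := Measure.rnDeriv_le_one_of_le hle
    set gm : X → ENNReal := fun x => min (g x) 1 with hgmdef
    have hgmm : Measurable gm := hgm.min measurable_const
    have hgmle : ∀ x, gm x ≤ 1 := fun x => min_le_right _ _
    have hgmne : ∀ x, gm x ≠ ⊤ := fun x => ne_top_of_le_ne_top ENNReal.one_ne_top (hgmle x)
    have hgmae : gm =ᵐ[W] g := by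
      filter_upwards [hgae] with x hx
      simp only [Pi.one_apply] at hx
      simp only [hgmdef, min_eq_left hx]
    have hwdgm : W.withDensity gm = τ • Z := by rw [withDensity_congr_ae hgmae, hwd]
    have hwdgm' : W.withDensity (fun x => 1 - gm x) = τ' • Z' := by
      have hsplit : W.withDensity gm + W.withDensity (fun x => 1 - gm x) = W := by
        rw [← withDensity_add_left hgmm]
        have h1 : (gm + fun x => 1 - gm x) = (1 : X → ENNReal) := by
          funext x
          simp only [Pi.add_apply, Pi.one_apply]
          exact add_tsub_cancel_of_le (hgmle x)
        rw [h1]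
        exact withDensity_one (μ := W)
      ext s hs
      refine (ENNReal.add_right_inj (measure_ne_top (τ • Z) s)).mp ?_
      calc (τ • Z) s + (W.withDensity fun x => 1 - gm x) s
          = (W.withDensity gm) s + (W.withDensity fun x => 1 - gm x) s := by rw [hwdgm]
        _ = W s := by rw [← Measure.add_apply, hsplit]
        _ = (τ • Z) s + (τ' • Z') s := by rw [hWc, Measure.add_apply]
    set gr : X → ℝ := fun x => (gm x).toReal with hgrdef
    have hgrm : Measurable gr := hgmm.ennreal_toReal
    have hgrmem : ∀ x, gr x ∈ Set.Icc (0:ℝ) 1 := by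
      intro x
      refine ⟨ENNReal.toReal_nonneg, ?_⟩
      have := ENNReal.toReal_mono ENNReal.one_ne_top (hgmle x)
      simpa using this
    -- the selector
    set σ : X → ProbabilityMeasure X := fun x => pprob (gr x) (σ₁ x) (σ₂ x) with hσdef
    haveI := secondCountable_probabilityMeasure (X := X)
    have hσm : Measurable σ := by
      have : σ = (fun p : ℝ × ProbabilityMeasure X × ProbabilityMeasure X =>
          pprob p.1 p.2.1 p.2.2) ∘ (fun x => (gr x, σ₁ x, σ₂ x)) := rfl
      rw [this]
      exact continuous_pprob.measurable.comp (hgrm.prodMk (hσ₁.prodMk hσ₂))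
    have hσG : ∀ x, σ x ∈ G x := by
      intro x
      obtain ⟨ρ, hρG, hρeq⟩ := hconv x (σ₁ x) (hG₁ x) (σ₂ x) (hG₂ x) (gr x) (hgrmem x)
      have : (ρ : Measure X) = (σ x : Measure X) := by
        rw [hρeq, hσdef]
        simp only []
        rw [pprob_coe, clamp_eq (hgrmem x)]
      rwa [ProbabilityMeasure.toMeasure_injective this] at hρG
    refine ⟨σ, hσm, hσG, ?_⟩
    intro f
    -- notation for inner integrals
    set I₁ : X → ℝ := fun x => ∫ y, f y ∂(σ₁ x : Measure X) with hI₁def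
    set I₂ : X → ℝ := fun x => ∫ y, f y ∂(σ₂ x : Measure X) with hI₂def
    have hptwise : ∀ x, ∫ y, f y ∂(σ x : Measure X) = gr x * I₁ x + (1 - gr x) * I₂ x := by
      intro x
      rw [hσdef]
      simp only []
      rw [integral_pprob (gr x) (σ₁ x) (σ₂ x) (f := fun y => f y)
        (by exact (BoundedContinuousFunction.mkOfCompact f).integrable _)
        (by exact (BoundedContinuousFunction.mkOfCompact f).integrable _),
        clamp_eq (hgrmem x)]
    -- integrability facts
    have hI₁m : Measurable I₁ := (continuous_integral_cm f).measurable.comp hσ₁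
    have hI₂m : Measurable I₂ := (continuous_integral_cm f).measurable.comp hσ₂
    have hbd₁ : ∀ x, ‖gr x * I₁ x‖ ≤ ‖f‖ := by
      intro x
      rw [norm_mul]
      calc ‖gr x‖ * ‖I₁ x‖ ≤ 1 * ‖f‖ := by
            refine mul_le_mul ?_ (norm_integral_le_prob f _) (norm_nonneg _) zero_le_one
            rw [Real.norm_eq_abs, abs_of_nonneg (hgrmem x).1]; exact (hgrmem x).2
        _ = ‖f‖ := one_mul _
    have hbd₂ : ∀ x, ‖(1 - gr x) * I₂ x‖ ≤ ‖f‖ := by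
      intro x
      rw [norm_mul]
      calc ‖1 - gr x‖ * ‖I₂ x‖ ≤ 1 * ‖f‖ := by
            refine mul_le_mul ?_ (norm_integral_le_prob f _) (norm_nonneg _) zero_le_one
            rw [Real.norm_eq_abs, abs_of_nonneg (by linarith [(hgrmem x).2])]
            linarith [(hgrmem x).1]
        _ = ‖f‖ := one_mul _
    have hint1 : Integrable (fun x => gr x * I₁ x) W :=
      Integrable.mono' (integrable_const ‖f‖) ((hgrm.mul hI₁m).aestronglyMeasurable)
        (Eventually.of_forall hbd₁)
    have hint2 : Integrable (fun x => (1 - gr x) * I₂ x) W :=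
      Integrable.mono' (integrable_const ‖f‖)
        (((measurable_const.sub hgrm).mul hI₂m).aestronglyMeasurable)
        (Eventually.of_forall hbd₂)
    -- first density identity
    have hd1 : ∫ x, gr x * I₁ x ∂W = t * ∫ x, I₁ x ∂Z := by
      have hpt : (fun x => gr x * I₁ x) = fun x => (gm x).toNNReal • I₁ x := by
        funext x
        simp [hgrdef, NNReal.smul_def, ENNReal.coe_toNNReal_eq_toReal]
      rw [hpt, ← integral_withDensity_eq_integral_smul (hgmm.ennreal_toNNReal) I₁]
      have hcoe : (fun x => ((gm x).toNNReal : ENNReal)) = gm := by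
        funext x; exact ENNReal.coe_toNNReal (hgmne x)
      rw [hcoe, hwdgm, integral_smul_measure, hτdef, ENNReal.toReal_ofReal ht.1, smul_eq_mul]
    -- second density identity
    have hd2 : ∫ x, (1 - gr x) * I₂ x ∂W = (1 - t) * ∫ x, I₂ x ∂Z' := by
      have h1gm : Measurable fun x => 1 - gm x := measurable_const.sub hgmm
      have h1gmne : ∀ x, 1 - gm x ≠ ⊤ :=
        fun x => ne_top_of_le_ne_top ENNReal.one_ne_top tsub_le_self
      have hpt : (fun x => (1 - gr x) * I₂ x) = fun x => (1 - gm x).toNNReal • I₂ x := by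
        funext x
        have : (1 - gm x).toReal = 1 - gr x := by
          rw [ENNReal.toReal_sub_of_le (hgmle x) ENNReal.one_ne_top, ENNReal.toReal_one]
        simp [NNReal.smul_def, ENNReal.coe_toNNReal_eq_toReal, this]
      rw [hpt, ← integral_withDensity_eq_integral_smul (h1gm.ennreal_toNNReal) I₂]
      have hcoe : (fun x => (((1 - gm x)).toNNReal : ENNReal)) = fun x => 1 - gm x := by
        funext x; exact ENNReal.coe_toNNReal (h1gmne x)
      rw [hcoe, hwdgm', integral_smul_measure, hτ'def,
        ENNReal.toReal_ofReal (by linarith : (0:ℝ) ≤ 1 - t), smul_eq_mul]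
    -- assemble
    have hL : ∫ x, f x ∂(μ : Measure X)
        = t * ∫ x, I₁ x ∂Z + (1 - t) * ∫ x, I₂ x ∂Z' := by
      rw [hμ, integral_pcomb ht a b
        (by exact (BoundedContinuousFunction.mkOfCompact f).integrable _)
        (by exact (BoundedContinuousFunction.mkOfCompact f).integrable _),
        hint₁ f, hint₂ f]
    have hR : ∫ x, (∫ y, f y ∂(σ x : Measure X)) ∂W
        = t * ∫ x, I₁ x ∂Z + (1 - t) * ∫ x, I₂ x ∂Z' := by
      have : (fun x => ∫ y, f y ∂(σ x : Measure X))
          = fun x => gr x * I₁ x + (1 - gr x) * I₂ x := funext hptwise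
      rw [this, integral_add hint1 hint2, hd1, hd2]
    rw [hL, ← hR]
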